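/- Elementary logarithmic inequality: For all real 0 < x < 1, 0 < b < 1, and k ≥ 1, x²/|ln x| - 2 (b/|ln b|) x k ≥ - (b²/|ln b|)(1 + 1/(2|ln b|)²) k². -/

import Mathlib

lemma key_quad (L s y : ℝ) (hL : 0 < L) (hs : 0 < s) (hy : 0 < y)
    (h : 1 + (s - L) ≤ y) :
    0 ≤ (1 + 1 / (2 * L) ^ 2) * s * y ^ 2 - 2 * s * y + L := by
  have hL2 : (0:ℝ) < 4 * L ^ 2 := by positivity
  have h1 : (1 : ℝ) + 1 / (2 * L) ^ 2 = (4 * L ^ 2 + 1) / (4 * L ^ 2) := by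
    field_simp; ring
  rw [h1]
  have key : 0 ≤ (4 * L ^ 2 + 1) * s * y ^ 2 - (4 * L ^ 2) * (2 * s * y) + (4 * L ^ 2) * L := by
    rcases le_or_gt (s * (4 * L ^ 2 + 1)) (4 * L ^ 3 + L) with hc | hc
    · -- discriminant case
      nlinarith [mul_nonneg hs.le (sq_nonneg ((4 * L ^ 2 + 1) * y - 4 * L ^ 2)),
        sq_nonneg (2 * L), mul_pos hL hL]
    · -- y large case
      set t := s - L with ht
      have ht0 : 0 < t := by nlinarith
      have hy1 : 1 + t ≤ y := by linarith
      have hq : 0 ≤ (4 * L ^ 2 + 1) * s * (1 + t) ^ 2 - (4 * L ^ 2) * (2 * s * (1 + t)) + (4 * L ^ 2) * L := by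
        have h2 : (0:ℝ) ≤ (2 * L * t - 1) ^ 2 := sq_nonneg _
        nlinarith [mul_pos hL ht0, mul_pos (mul_pos hL ht0) ht0, sq_nonneg (2 * L * t - 1),
          mul_nonneg (mul_nonneg hL.le ht0.le) (sq_nonneg t), mul_pos hL hL]
      -- monotone beyond 1+t
      nlinarith [mul_nonneg (mul_nonneg hs.le (sub_nonneg.2 hy1))
        (by nlinarith : (0:ℝ) ≤ (4 * L ^ 2 + 1) * (y + (1 + t)) - 8 * L ^ 2)]
  have := div_nonneg key hL2.le
  calc (0:ℝ) ≤ ((4 * L ^ 2 + 1) * s * y ^ 2 - (4 * L ^ 2) * (2 * s * y) + (4 * L ^ 2) * L) / (4 * L ^ 2) := this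
    _ = (4 * L ^ 2 + 1) / (4 * L ^ 2) * s * y ^ 2 - 2 * s * y + L := by field_simp

/-- **Elementary logarithmic inequality** (Lemma `xb` of the 2D trapped Bose gas lower
bound): for `0 < x < 1`, `0 < b < 1` and `k ≥ 1`,
`x²/|ln x| - 2 (b/|ln b|) x k ≥ - (b²/|ln b|)(1 + 1/(2|ln b|)²) k²`. -/
theorem log_inequality (x b k : ℝ) (hx0 : 0 < x) (hx1 : x < 1)
    (hb0 : 0 < b) (hb1 : b < 1) (hk : 1 ≤ k) :
    -(b ^ 2 / |Real.log b|) * (1 + 1 / (2 * |Real.log b|) ^ 2) * k ^ 2 ≤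
      x ^ 2 / |Real.log x| - 2 * (b / |Real.log b|) * x * k := by
  have hlx : Real.log x < 0 := Real.log_neg hx0 hx1
  have hlb : Real.log b < 0 := Real.log_neg hb0 hb1
  rw [abs_of_neg hlx, abs_of_neg hlb]
  set s : ℝ := -Real.log x with hsdef
  set L : ℝ := -Real.log b with hLdef
  have hs : 0 < s := by simp [hsdef]; linarith
  have hL : 0 < L := by simp [hLdef]; linarith
  set y : ℝ := k * b / x with hydef
  have hy : 0 < y := by positivity
  have hbx : 0 < b / x := by positivity
  have hexp : 1 + (s - L) ≤ b / x := by
    have h1 : s - L = Real.log (b / x) := by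
      rw [Real.log_div hb0.ne' hx0.ne']; simp [hsdef, hLdef]; ring
    have h2 := Real.add_one_le_exp (Real.log (b / x))
    rw [Real.exp_log hbx] at h2
    linarith
  have hyge : 1 + (s - L) ≤ y := by
    have : b / x ≤ y := by
      rw [hydef]
      calc b / x = 1 * (b / x) := by ring
        _ ≤ k * (b / x) := by apply mul_le_mul_of_nonneg_right hk hbx.le
        _ = k * b / x := by ring
    linarith
  have key := key_quad L s y hL hs hy hyge
  rw [← sub_nonneg]
  have heq : x ^ 2 / s - 2 * (b / L) * x * k - -(b ^ 2 / L) * (1 + 1 / (2 * L) ^ 2) * k ^ 2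
      = x ^ 2 / (L * s) * ((1 + 1 / (2 * L) ^ 2) * s * y ^ 2 - 2 * s * y + L) := by
    rw [hydef]; field_simp; ring
  rw [heq]
  positivity
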